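/- For every L(1,2)-edge labeling f of G_v and every edge e in S_2, at most one edge of G_v other than e has label f(e); that is, the label of an edge of S_2 is used at most twice in G_v. -/

import Mathlib

/-- The infinite triangular grid `T6`. -/
def T6 : SimpleGraph (ℤ × ℤ) where
  Adj u v := (v.1 - u.1, v.2 - u.2) ∈
    ({(1,0), (-1,0), (0,1), (0,-1), (1,1), (-1,-1)} : Set (ℤ × ℤ))
  symm := ⟨by
    rintro ⟨a, b⟩ ⟨c, d⟩ h
    simp only [Set.mem_insert_iff, Set.mem_singleton_iff, Prod.mk.injEq] at h ⊢
    omega⟩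
  loopless := ⟨by
    rintro ⟨a, b⟩ h
    simp only [Set.mem_insert_iff, Set.mem_singleton_iff, Prod.mk.injEq, sub_self] at h
    omega⟩

/-- `f` is an L(1,2)-edge labeling of `G`. -/
def IsL12 {V : Type*} (G : SimpleGraph V) (f : Sym2 V → ℕ) : Prop :=
  (∀ e1 ∈ G.edgeSet, ∀ e2 ∈ G.edgeSet, e1 ≠ e2 → (∃ v, v ∈ e1 ∧ v ∈ e2) →
    f e1 ≠ f e2) ∧
  (∀ e1 ∈ G.edgeSet, ∀ e2 ∈ G.edgeSet, e1 ≠ e2 → ¬ (∃ v, v ∈ e1 ∧ v ∈ e2) →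
    (∃ e3 ∈ G.edgeSet, (∃ v, v ∈ e1 ∧ v ∈ e3) ∧ (∃ v, v ∈ e2 ∧ v ∈ e3)) →
    2 ≤ |(f e1 : ℤ) - (f e2 : ℤ)|)

/-- The subgraph `G_v` of `T6`: all edges with an endpoint adjacent to `v`. -/
def Gv (v : ℤ × ℤ) : SimpleGraph (ℤ × ℤ) where
  Adj u w := T6.Adj u w ∧ (T6.Adj v u ∨ T6.Adj v w)
  symm := ⟨fun u w h => ⟨T6.adj_symm h.1, h.2.symm⟩⟩
  loopless := ⟨fun u h => T6.loopless.irrefl u h.1⟩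

/-- `S_1`: the edges of `G_v` incident to `v`. -/
def S1 (v : ℤ × ℤ) : Set (Sym2 (ℤ × ℤ)) := {e | e ∈ (Gv v).edgeSet ∧ v ∈ e}

/-- `S_2`: the edges of `G_v` both of whose endpoints are adjacent to `v`. -/
def S2 (v : ℤ × ℤ) : Set (Sym2 (ℤ × ℤ)) := {e | e ∈ (Gv v).edgeSet ∧ ∀ u ∈ e, T6.Adj v u}

/-- `S_3`: the remaining edges of `G_v`. -/
def S3 (v : ℤ × ℤ) : Set (Sym2 (ℤ × ℤ)) := (Gv v).edgeSet \ (S1 v ∪ S2 v)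


/-- The six direction vectors of `T6` as a list. -/
def D : List (ℤ × ℤ) := [(1,0),(-1,0),(0,1),(0,-1),(1,1),(-1,-1)]

lemma t6adjD (u w : ℤ × ℤ) : T6.Adj u w ↔ w - u ∈ D := by
  show (w.1 - u.1, w.2 - u.2) ∈ _ ↔ _
  simp [D, Prod.sub_def, Prod.ext_iff]

lemma negD {p : ℤ × ℤ} (hp : p ∈ D) : -p ∈ D := by
  fin_cases hp <;> decide

/-- The finite combinatorial core, checked by `decide`. -/
lemma key0 : ∀ da ∈ D, ∀ db ∈ D, ∀ dc ∈ D, db - da ∈ D → dc ≠ da → dc ≠ db →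
    da - dc ∉ D → db - dc ∉ D → (dc = -da ∨ dc = -db) := by decide

/-- A vertex adjacent to `v`, distinct from and non-adjacent to both endpoints of an
`S2`-edge `{a,b}`, must be one of the two "opposite" hexagon vertices. -/
lemma key (v a b c : ℤ × ℤ) (hva : T6.Adj v a) (hvb : T6.Adj v b) (hab : T6.Adj a b)
    (hvc : T6.Adj v c) (h1 : c ≠ a) (h2 : c ≠ b) (h3 : ¬ T6.Adj c a) (h4 : ¬ T6.Adj c b) :
    c - v = v - a ∨ c - v = v - b := by
  rw [t6adjD] at hva hvb hab hvc h3 h4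
  have h1' : c - v ≠ a - v := fun h => h1 (by rwa [sub_left_inj] at h)
  have h2' : c - v ≠ b - v := fun h => h2 (by rwa [sub_left_inj] at h)
  have hab' : (b - v) - (a - v) ∈ D := by rwa [sub_sub_sub_cancel_right]
  have h3' : (a - v) - (c - v) ∉ D := by rwa [sub_sub_sub_cancel_right]
  have h4' : (b - v) - (c - v) ∉ D := by rwa [sub_sub_sub_cancel_right]
  have := key0 (a - v) hva (b - v) hvb (c - v) hvc hab' h1' h2' h3' h4'
  rcases this with h | h
  · left; rw [h, neg_sub]
  · right; rw [h, neg_sub]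

/-- The label of an edge of `S_2` is used at most twice in `G_v`: at most one edge of
`G_v` other than `e` has label `f e`. -/
theorem S2_label_at_most_twice (v : ℤ × ℤ) (f : Sym2 (ℤ × ℤ) → ℕ)
    (hf : IsL12 (Gv v) f) : ∀ e ∈ S2 v,
    ∀ e1 ∈ (Gv v).edgeSet, ∀ e2 ∈ (Gv v).edgeSet,
      e1 ≠ e → e2 ≠ e → f e1 = f e → f e2 = f e → e1 = e2 := by
  obtain ⟨hd1, hd2⟩ := hf
  intro e he e1 he1 e2 he2 hne1 hne2 hfe1 hfe2
  by_contra h12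
  obtain ⟨heE, heS⟩ := he
  -- no shared vertices
  have sh1 : ¬ ∃ x, x ∈ e1 ∧ x ∈ e := fun h => hd1 e1 he1 e heE hne1 h (by rw [hfe1])
  have sh2 : ¬ ∃ x, x ∈ e2 ∧ x ∈ e := fun h => hd1 e2 he2 e heE hne2 h (by rw [hfe2])
  have sh3 : ¬ ∃ x, x ∈ e1 ∧ x ∈ e2 := fun h => hd1 e1 he1 e2 he2 h12 h (by rw [hfe1, hfe2])
  -- no connecting edges
  have co1 : ¬ ∃ e3 ∈ (Gv v).edgeSet, (∃ x, x ∈ e1 ∧ x ∈ e3) ∧ (∃ x, x ∈ e ∧ x ∈ e3) := by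
    intro h
    have := hd2 e1 he1 e heE hne1 sh1 h
    rw [hfe1] at this; simp at this
  have co2 : ¬ ∃ e3 ∈ (Gv v).edgeSet, (∃ x, x ∈ e2 ∧ x ∈ e3) ∧ (∃ x, x ∈ e ∧ x ∈ e3) := by
    intro h
    have := hd2 e2 he2 e heE hne2 sh2 h
    rw [hfe2] at this; simp at this
  have co3 : ¬ ∃ e3 ∈ (Gv v).edgeSet, (∃ x, x ∈ e1 ∧ x ∈ e3) ∧ (∃ x, x ∈ e2 ∧ x ∈ e3) := by
    intro h
    have := hd2 e1 he1 e2 he2 h12 sh3 h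
    rw [hfe1, hfe2] at this; simp at this
  clear hd1 hd2 hne1 hne2 hfe1 hfe2 h12
  induction e using Sym2.ind with | _ a b =>
  rw [SimpleGraph.mem_edgeSet] at heE
  have hva : T6.Adj v a := heS a (by simp)
  have hvb : T6.Adj v b := heS b (by simp)
  have hab : T6.Adj a b := heE.1
  -- each of e1, e2 has an endpoint on the opposite hexagon edge
  have main : ∀ E : Sym2 (ℤ × ℤ), E ∈ (Gv v).edgeSet →
      (¬ ∃ x, x ∈ E ∧ x ∈ s(a,b)) →
      (¬ ∃ e3 ∈ (Gv v).edgeSet, (∃ x, x ∈ E ∧ x ∈ e3) ∧ (∃ x, x ∈ s(a,b) ∧ x ∈ e3)) →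
      ∃ x, x ∈ E ∧ (x - v = v - a ∨ x - v = v - b) := by
    intro E hE hsh hco
    induction E using Sym2.ind with | _ c d =>
    rw [SimpleGraph.mem_edgeSet] at hE
    obtain ⟨hcd, hor⟩ := hE
    push_neg at hsh
    rcases hor with hvc | hvd
    · refine ⟨c, by simp, key v a b c hva hvb hab hvc ?_ ?_ ?_ ?_⟩
      · exact fun h => hsh c (by simp) (by rw [h]; simp)
      · exact fun h => hsh c (by simp) (by rw [h]; simp)
      · intro h
        exact hco ⟨s(c,a), ⟨h, Or.inr hva⟩, ⟨c, by simp, by simp⟩, ⟨a, by simp, by simp⟩⟩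
      · intro h
        exact hco ⟨s(c,b), ⟨h, Or.inr hvb⟩, ⟨c, by simp, by simp⟩, ⟨b, by simp, by simp⟩⟩
    · refine ⟨d, by simp, key v a b d hva hvb hab hvd ?_ ?_ ?_ ?_⟩
      · exact fun h => hsh d (by simp) (by rw [h]; simp)
      · exact fun h => hsh d (by simp) (by rw [h]; simp)
      · intro h
        exact hco ⟨s(d,a), ⟨h, Or.inr hva⟩, ⟨d, by simp, by simp⟩, ⟨a, by simp, by simp⟩⟩
      · intro h
        exact hco ⟨s(d,b), ⟨h, Or.inr hvb⟩, ⟨d, by simp, by simp⟩, ⟨b, by simp, by simp⟩⟩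
  obtain ⟨x, hx1, hxAB⟩ := main e1 he1 sh1 co1
  obtain ⟨y, hy2, hyAB⟩ := main e2 he2 sh2 co2
  have hxy : x ≠ y := fun h => sh3 ⟨x, hx1, h ▸ hy2⟩
  rw [t6adjD] at hva hvb hab
  -- x and y are the two distinct opposite hexagon vertices, hence adjacent
  have hyx : T6.Adj x y := by
    rw [t6adjD]
    have hsub : y - x = (y - v) - (x - v) := (sub_sub_sub_cancel_right y x v).symm
    rcases hxAB with hx' | hx' <;> rcases hyAB with hy' | hy'
    · exact absurd (by rwa [← hy', sub_left_inj] at hx') hxy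
    · rw [hsub, hx', hy', sub_sub_sub_cancel_left, ← neg_sub]
      exact negD hab
    · rw [hsub, hx', hy', sub_sub_sub_cancel_left]
      exact hab
    · exact absurd (by rwa [← hy', sub_left_inj] at hx') hxy
  have hvx : T6.Adj v x := by
    rw [t6adjD]
    have : x - v = x - v := rfl
    rcases hxAB with hx' | hx'
    · rw [hx', ← neg_sub]; exact negD hva
    · rw [hx', ← neg_sub]; exact negD hvb
  exact co3 ⟨s(x,y), ⟨hyx, Or.inl hvx⟩, ⟨x, hx1, by simp⟩, ⟨y, hy2, by simp⟩⟩
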